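/- Let x̄¹,…,x̄^{N−1} and ȳ¹,…,ȳ^N be finite tuples of complex numbers with |x̄^j| = |ȳ^j| for 1 ≤ j ≤ N−1. Then the rational enlarged rectangular partition function factorizes as K(x̄¹,…,x̄^{N−1} | ȳ¹,…,ȳ^N) = Π_{j=1}^{N−1}(x̄^j − ȳ^N + h) · H(x̄¹,…,x̄^{N−1} | ȳ¹,…,ȳ^{N−1}). -/
import Mathlib


open scoped BigOperators

noncomputable section

namespace MultComm

/-- Entries of the trigonometric R-matrix: row `p = (k,ℓ)`, column `c = (i,j)`,
so that `R e_i ⊗ e_j = ∑ [R]_{ij}^{kℓ} e_k ⊗ e_ℓ`. -/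
def Rtrig (N : ℕ) (q : ℂ) (u v : ℂ) : Matrix (Fin N × Fin N) (Fin N × Fin N) ℂ :=
  Matrix.of fun p c =>
    if p = c then (if c.1 = c.2 then q * u - q⁻¹ * v else u - v)
    else if p.1 = c.2 ∧ p.2 = c.1 then
      (if (p.1 : ℕ) < (p.2 : ℕ) then (q - q⁻¹) * v else (q - q⁻¹) * u)
    else 0

/-- The second trigonometric R-matrix convention. -/
def Rtrig2 (N : ℕ) (q : ℂ) (u v : ℂ) : Matrix (Fin N × Fin N) (Fin N × Fin N) ℂ :=
  Matrix.of fun p c =>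
    if p = c then (if c.1 = c.2 then q * u - q⁻¹ * v else u - v)
    else if p.1 = c.2 ∧ p.2 = c.1 then
      (if (p.1 : ℕ) < (p.2 : ℕ) then (q - q⁻¹) * u else (q - q⁻¹) * v)
    else 0

/-- The rational R-matrix. -/
def Rrat (N : ℕ) (h : ℂ) (x y : ℂ) : Matrix (Fin N × Fin N) (Fin N × Fin N) ℂ :=
  Matrix.of fun p c =>
    if p = c then (if c.1 = c.2 then x - y + h else x - y)
    else if p.1 = c.2 ∧ p.2 = c.1 then h
    else 0

/-- An R-matrix acting in the auxiliary space `0` and the `k`-th quantum space. -/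
def Raux (N n : ℕ) (Rm : Matrix (Fin N × Fin N) (Fin N × Fin N) ℂ) (k : Fin n) :
    Matrix (Fin N × (Fin n → Fin N)) (Fin N × (Fin n → Fin N)) ℂ :=
  Matrix.of fun p c =>
    if (∀ j, j ≠ k → p.2 j = c.2 j) then Rm (p.1, p.2 k) (c.1, c.2 k) else 0

/-- The monodromy matrix `T^vect(u; ξ) = R_{0n}(u,ξ_n) ⋯ R_{01}(u,ξ_1)`. -/
def Tmon (N n : ℕ) (Rm : ℂ → ℂ → Matrix (Fin N × Fin N) (Fin N × Fin N) ℂ)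
    (u : ℂ) (ξ : Fin n → ℂ) :
    Matrix (Fin N × (Fin n → Fin N)) (Fin N × (Fin n → Fin N)) ℂ :=
  (((List.finRange n).reverse).map (fun k => Raux N n (Rm u (ξ k)) k)).prod

/-- The entry `T_{ij}(u; ξ)`, an operator on the quantum spaces. -/
def Tent (N n : ℕ) (Rm : ℂ → ℂ → Matrix (Fin N × Fin N) (Fin N × Fin N) ℂ)
    (i j : Fin N) (u : ℂ) (ξ : Fin n → ℂ) :
    Matrix (Fin n → Fin N) (Fin n → Fin N) ℂ :=
  Matrix.of fun f g => Tmon N n Rm u ξ (i, f) (j, g)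

/-- Product of the (commuting) entries `T_{ij}(u;ξ)` over a list of spectral parameters. -/
def TentL (N n : ℕ) (Rm : ℂ → ℂ → Matrix (Fin N × Fin N) (Fin N × Fin N) ℂ)
    (i j : Fin N) (l : List ℂ) (ξ : Fin n → ℂ) :
    Matrix (Fin n → Fin N) (Fin n → Fin N) ℂ :=
  (l.map (fun u => Tent N n Rm i j u ξ)).prod

/-- Product of the entries `T_{ij}(w_k;ξ)` over a finite index set. -/
def TentS (N n : ℕ) (Rm : ℂ → ℂ → Matrix (Fin N × Fin N) (Fin N × Fin N) ℂ)
    (i j : Fin N) (w : Fin n → ℂ) (s : Finset (Fin n)) (ξ : Fin n → ℂ) :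
    Matrix (Fin n → Fin N) (Fin n → Fin N) ℂ :=
  TentL N n Rm i j (s.toList.map w) ξ

/-- The basis vector `e_{f}` of `V^{⊗ n}`. -/
def bvec (N n : ℕ) (f : Fin n → Fin N) : (Fin n → Fin N) → ℂ :=
  fun g => if g = f then 1 else 0

/-- The RTT relation for an `N×N` matrix of generators over an algebra `A`. -/
def RTT (N : ℕ) (Rm : ℂ → ℂ → Matrix (Fin N × Fin N) (Fin N × Fin N) ℂ)
    (A : Type*) [Ring A] [Algebra ℂ A] (D : Finset ℂ)
    (T : ℂ → Fin N → Fin N → A) : Prop :=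
  ∀ u ∈ D, ∀ v ∈ D, ∀ i j k l : Fin N,
    (∑ a : Fin N, ∑ b : Fin N, Rm u v (i, j) (a, b) • (T u a k * T v b l)) =
    (∑ a : Fin N, ∑ b : Fin N, Rm u v (a, b) (k, l) • (T v j b * T u i a))

/-- Ordered product of generators over a finite index set. -/
def Aprod {A : Type*} [Monoid A] {n : ℕ} (f : ℂ → A) (w : Fin n → ℂ)
    (s : Finset (Fin n)) : A :=
  (s.toList.map (fun k => f (w k))).prod

/-- Pair product `∏_{a∈s} ∏_{b∈t} (α w_a - β w_b + γ)`. -/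
def wpair {n : ℕ} (w : Fin n → ℂ) (s t : Finset (Fin n)) (α β γ : ℂ) : ℂ :=
  ∏ a ∈ s, ∏ b ∈ t, (α * w a - β * w b + γ)

/-- The 1-based block of a colouring. -/
def blk {n N : ℕ} (c : Fin n → Fin N) (j : ℕ) : Finset (Fin n) :=
  Finset.univ.filter (fun k => (c k : ℕ) + 1 = j)

/-- The block of a colouring with a given colour. -/
def blkF {n N : ℕ} (c : Fin n → Fin N) (j : Fin N) : Finset (Fin n) :=
  Finset.univ.filter (fun k => c k = j)

/-- One layer of the trigonometric weight function. -/
def layerT (q : ℂ) {m l : ℕ} (x : Fin m → ℂ) (y : Fin l → ℂ) : ℂ :=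
  (∏ a : Fin m,
      ((∏ i ∈ Finset.univ.filter (fun i : Fin l => (i : ℕ) < (a : ℕ)), (x a - y i))
        * ((q - q⁻¹) * x a)
        * ∏ i ∈ Finset.univ.filter (fun i : Fin l => (a : ℕ) < (i : ℕ)),
            (q * x a - q⁻¹ * y i)))
    * ∏ a : Fin m, ∏ b ∈ Finset.univ.filter (fun b : Fin m => (a : ℕ) < (b : ℕ)),
        ((q⁻¹ * x a - q * x b) / (x a - x b))

/-- One layer of the rational weight function. -/
def layerR (h : ℂ) {m l : ℕ} (x : Fin m → ℂ) (y : Fin l → ℂ) : ℂ :=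
  (∏ a : Fin m,
      ((∏ i ∈ Finset.univ.filter (fun i : Fin l => (i : ℕ) < (a : ℕ)), (x a - y i))
        * h
        * ∏ i ∈ Finset.univ.filter (fun i : Fin l => (a : ℕ) < (i : ℕ)),
            (x a - y i + h)))
    * ∏ a : Fin m, ∏ b ∈ Finset.univ.filter (fun b : Fin m => (a : ℕ) < (b : ℕ)),
        ((x a - x b - h) / (x a - x b))

/-- The specialised trigonometric weight function for the colour sequence
`(1^{k_1}, 2^{k_2-k_1}, …, N^{L-k_{N-1}})`. -/
def Wtrig (q : ℂ) (M : ℕ) (k : Fin M → ℕ) (L : ℕ)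
    (U : (p : Fin M) → Fin (k p) → ℂ) (V : Fin L → ℂ) : ℂ :=
  ∑ σ : ((p : Fin M) → Equiv.Perm (Fin (k p))),
    ∏ p : Fin M,
      if h : (p : ℕ) + 1 < M then
        layerT q (fun a => U p (σ p a))
          (fun i => U ⟨(p : ℕ) + 1, h⟩ (σ ⟨(p : ℕ) + 1, h⟩ i))
      else
        layerT q (fun a => U p (σ p a)) V

/-- The specialised rational weight function. -/
def Wrat (h : ℂ) (M : ℕ) (k : Fin M → ℕ) (L : ℕ)
    (U : (p : Fin M) → Fin (k p) → ℂ) (V : Fin L → ℂ) : ℂ :=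
  ∑ σ : ((p : Fin M) → Equiv.Perm (Fin (k p))),
    ∏ p : Fin M,
      if hp : (p : ℕ) + 1 < M then
        layerR h (fun a => U p (σ p a))
          (fun i => U ⟨(p : ℕ) + 1, hp⟩ (σ ⟨(p : ℕ) + 1, hp⟩ i))
      else
        layerR h (fun a => U p (σ p a)) V

/-- The trigonometric Izergin–Korepin determinant. -/
def IKtrig (q : ℂ) {m : ℕ} (u v : Fin m → ℂ) : ℂ :=
  (∏ i : Fin m, ∏ j ∈ Finset.univ.filter (fun j : Fin m => i < j),
      ((u i - u j) * (v j - v i)))⁻¹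
    * Matrix.det (Matrix.of fun i j : Fin m =>
        (q - q⁻¹) * u i *
          ∏ k ∈ Finset.univ.filter (fun k : Fin m => k ≠ j),
            ((q * u i - q⁻¹ * v k) * (u i - v k)))

/-- The rational Izergin–Korepin determinant. -/
def IKrat (h : ℂ) {m : ℕ} (x y : Fin m → ℂ) : ℂ :=
  (∏ i : Fin m, ∏ j ∈ Finset.univ.filter (fun j : Fin m => i < j),
      ((x i - x j) * (y j - y i)))⁻¹
    * Matrix.det (Matrix.of fun i j : Fin m =>
        h * ∏ k ∈ Finset.univ.filter (fun k : Fin m => k ≠ j),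
            ((x i - y k + h) * (x i - y k)))

/-- The number of inversions of a permutation of `Fin r`. -/
def invCount {r : ℕ} (σ : Equiv.Perm (Fin r)) : ℕ :=
  (Finset.univ.filter (fun p : Fin r × Fin r => p.1 < p.2 ∧ σ p.2 < σ p.1)).card

/-- The quantum determinant `qdet T^{(r)}(u)` in the vector representation. -/
def qdetT (N n : ℕ) (q : ℂ) (w : Fin n → ℂ) (r : ℕ) (hr : r ≤ N) (u : ℂ) :
    Matrix (Fin n → Fin N) (Fin n → Fin N) ℂ :=
  ∑ σ : Equiv.Perm (Fin r),
    ((-q) ^ (-(invCount σ : ℤ))) •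
      (((List.finRange r).reverse.map
          (fun i => Tent N n (Rtrig N q) (Fin.castLE hr i) (Fin.castLE hr (σ i))
            (q ^ (2 * (i : ℕ)) * u) w)).prod)

end MultComm

section KAux
open MultComm

namespace KAux

theorem finRange_add (m n : ℕ) :
    List.finRange (m + n) =
      (List.finRange m).map (Fin.castAdd n) ++ (List.finRange n).map (Fin.natAdd m) := by
  apply List.ext_getElem (by simp)
  intro i h1 h2
  by_cases hi : i < m
  · rw [List.getElem_append_left (by simpa using hi)]
    simp only [List.getElem_map, List.getElem_finRange]
    ext
    simp
  · rw [List.getElem_append_right (by simpa using hi)]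
    simp only [List.getElem_map, List.getElem_finRange, List.length_map, List.length_finRange]
    ext
    simp
    omega

lemma append_fun_ext {α : Type*} {m n : ℕ} (f g : Fin (m + n) → α)
    (h1 : ∀ a, f (Fin.castAdd n a) = g (Fin.castAdd n a))
    (h2 : ∀ b, f (Fin.natAdd m b) = g (Fin.natAdd m b)) : f = g := by
  funext j
  cases j using Fin.addCases with
  | left a => exact h1 a
  | right b => exact h2 b

lemma fun_eq_iff {α : Type*} {m n : ℕ} (f g : Fin (m + n) → α) :
    f = g ↔ (fun a => f (Fin.castAdd n a)) = (fun a => g (Fin.castAdd n a)) ∧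
      (fun b => f (Fin.natAdd m b)) = (fun b => g (Fin.natAdd m b)) := by
  constructor
  · rintro rfl; exact ⟨rfl, rfl⟩
  · rintro ⟨h1, h2⟩
    exact append_fun_ext f g (fun a => congrFun h1 a) (fun b => congrFun h2 b)

lemma sum_append {N : ℕ} (n' nN : ℕ) {α : Type*} [AddCommMonoid α]
    (F : (Fin (n' + nN) → Fin N) → α) :
    (∑ m, F m) = ∑ u : Fin n' → Fin N, ∑ v : Fin nN → Fin N, F (Fin.append u v) := by
  rw [← Equiv.sum_comp (Fin.appendEquiv n' nN) F, Fintype.sum_prod_type]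
  simp [Fin.appendEquiv]

/-- The row `(i, f)` of `Raux` with `f k = i` is `(x - y + h)` times the basis row `e_{(i,f)}`. -/
lemma Raux_diag_row (N n : ℕ) (h x y : ℂ) (k : Fin n) (i : Fin N)
    (f : Fin n → Fin N) (hf : f k = i) (c : Fin N × (Fin n → Fin N)) :
    Raux N n (Rrat N h x y) k (i, f) c = if c = (i, f) then x - y + h else 0 := by
  obtain ⟨j, g⟩ := c
  simp only [Raux, Rrat, Matrix.of_apply, hf]
  by_cases hc : ((j, g) : Fin N × (Fin n → Fin N)) = (i, f)
  · rw [Prod.mk.injEq] at hc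
    obtain ⟨rfl, rfl⟩ := hc
    simp [hf]
  · rw [if_neg hc]
    by_cases H : ∀ jj, jj ≠ k → f jj = g jj
    · have key : j = i → g k = i → False := by
        intro hj hgk
        apply hc
        rw [Prod.mk.injEq]
        refine ⟨hj, funext fun jj => ?_⟩
        by_cases hjj : jj = k
        · rw [hjj, hgk, hf]
        · exact (H jj hjj).symm
      rw [if_pos H, if_neg, if_neg]
      · rintro ⟨h1, h2⟩
        exact key h2.symm h1.symm
      · intro h1
        rw [Prod.mk.injEq] at h1
        exact key h1.1.symm h1.2.symm
    · rw [if_neg H]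

lemma rowScalar_mul {I : Type*} [Fintype I] [DecidableEq I]
    (A Q : Matrix I I ℂ) (p : I) (s : ℂ) (hA : ∀ c, A p c = if c = p then s else 0) (c : I) :
    (A * Q) p c = s * Q p c := by
  rw [Matrix.mul_apply]
  simp only [hA, ite_mul, zero_mul, Finset.sum_ite_eq', Finset.mem_univ, if_true]

lemma tail_prod_mul {ι : Type*} (N n : ℕ) (h u : ℂ) (L : List ι)
    (site : ι → Fin n) (prm : ι → ℂ) (i : Fin N) (f : Fin n → Fin N)
    (hf : ∀ k ∈ L, f (site k) = i)
    (Q : Matrix (Fin N × (Fin n → Fin N)) (Fin N × (Fin n → Fin N)) ℂ)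
    (c : Fin N × (Fin n → Fin N)) :
    ((L.map (fun k => Raux N n (Rrat N h u (prm k)) (site k))).prod * Q) (i, f) c =
      (L.map (fun k => u - prm k + h)).prod * Q (i, f) c := by
  induction L with
  | nil => simp
  | cons k L ih =>
    simp only [List.map_cons, List.prod_cons]
    rw [Matrix.mul_assoc,
      rowScalar_mul _ _ _ _
        (fun c => Raux_diag_row N n h u (prm k) (site k) i f (hf k (by simp)) c),
      ih (fun k hk => hf k (by simp [hk]))]
    ring

/-- Lift of an operator on the first `n'` sites to `n' + nN` sites. -/
def liftM (N n' nN : ℕ)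
    (A : Matrix (Fin N × (Fin n' → Fin N)) (Fin N × (Fin n' → Fin N)) ℂ) :
    Matrix (Fin N × (Fin (n' + nN) → Fin N)) (Fin N × (Fin (n' + nN) → Fin N)) ℂ :=
  Matrix.of fun p c =>
    if (fun b => p.2 (Fin.natAdd n' b)) = (fun b => c.2 (Fin.natAdd n' b)) then
      A (p.1, fun a => p.2 (Fin.castAdd nN a)) (c.1, fun a => c.2 (Fin.castAdd nN a))
    else 0

lemma liftM_one (N n' nN : ℕ) : liftM N n' nN (1 : Matrix _ _ ℂ) = 1 := by
  ext ⟨i, f⟩ ⟨j, g⟩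
  simp only [liftM, Matrix.of_apply, Matrix.one_apply, Prod.mk.injEq, fun_eq_iff f g]
  by_cases h2 : (fun b => f (Fin.natAdd n' b)) = (fun b => g (Fin.natAdd n' b)) <;>
    by_cases h1 : (fun a => f (Fin.castAdd nN a)) = (fun a => g (Fin.castAdd nN a)) <;>
      simp [h1, h2]

lemma liftM_mul (N n' nN : ℕ)
    (A B : Matrix (Fin N × (Fin n' → Fin N)) (Fin N × (Fin n' → Fin N)) ℂ) :
    liftM N n' nN (A * B) = liftM N n' nN A * liftM N n' nN B := by
  ext ⟨i, f⟩ ⟨j, g⟩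
  conv_rhs => rw [Matrix.mul_apply, Fintype.sum_prod_type]
  have hre : (∑ a : Fin N, ∑ m : Fin (n' + nN) → Fin N,
      liftM N n' nN A (i, f) (a, m) * liftM N n' nN B (a, m) (j, g)) =
    ∑ a : Fin N, ∑ u : Fin n' → Fin N, ∑ v : Fin nN → Fin N,
      liftM N n' nN A (i, f) (a, Fin.append u v) *
        liftM N n' nN B (a, Fin.append u v) (j, g) :=
    by
      refine Finset.sum_congr rfl fun a _ => ?_
      exact sum_append n' nN
        (fun m => liftM N n' nN A (i, f) (a, m) * liftM N n' nN B (a, m) (j, g))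
  rw [hre]
  simp only [liftM, Matrix.of_apply, Fin.append_right, Fin.append_left]
  by_cases hfg : (fun b => f (Fin.natAdd n' b)) = (fun b => g (Fin.natAdd n' b))
  · rw [if_pos hfg, Matrix.mul_apply, Fintype.sum_prod_type]
    refine Finset.sum_congr rfl fun a _ => ?_
    refine Finset.sum_congr rfl fun u _ => ?_
    rw [Finset.sum_eq_single (fun b => f (Fin.natAdd n' b))]
    · rw [if_pos rfl, if_pos hfg]
    · intro v _ hv
      rw [if_neg (Ne.symm hv), zero_mul]
    · intro habs
      exact absurd (Finset.mem_univ _) habs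
  · rw [if_neg hfg]
    refine (Finset.sum_eq_zero fun a _ => Finset.sum_eq_zero fun u _ =>
      Finset.sum_eq_zero fun v _ => ?_).symm
    by_cases hv : (fun b => f (Fin.natAdd n' b)) = v
    · rw [if_neg (fun hvg => hfg (hv.trans hvg)), mul_zero]
    · rw [if_neg hv, zero_mul]

lemma liftM_list_prod (N n' nN : ℕ)
    (l : List (Matrix (Fin N × (Fin n' → Fin N)) (Fin N × (Fin n' → Fin N)) ℂ)) :
    (l.map (liftM N n' nN)).prod = liftM N n' nN l.prod := by
  induction l with
  | nil => simpa using (liftM_one N n' nN).symm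
  | cons A l ih => simp [ih, liftM_mul]

lemma Raux_castAdd (N n' nN : ℕ) (M : Matrix (Fin N × Fin N) (Fin N × Fin N) ℂ) (k : Fin n') :
    Raux N (n' + nN) M (Fin.castAdd nN k) = liftM N n' nN (Raux N n' M k) := by
  ext ⟨i, f⟩ ⟨j, g⟩
  simp only [Raux, liftM, Matrix.of_apply]
  have hcond : (∀ jj, jj ≠ Fin.castAdd nN k → f jj = g jj) ↔
      ((fun b => f (Fin.natAdd n' b)) = fun b => g (Fin.natAdd n' b)) ∧
        (∀ a, a ≠ k → f (Fin.castAdd nN a) = g (Fin.castAdd nN a)) := by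
    constructor
    · intro H
      refine ⟨funext fun b => H _ ?_, fun a ha => H _ ?_⟩
      · intro hb
        have := congrArg Fin.val hb
        simp at this
        omega
      · intro hab
        apply ha
        have := congrArg Fin.val hab
        ext
        simpa using this
    · rintro ⟨h1, h2⟩ jj hjj
      cases jj using Fin.addCases with
      | left a => exact h2 a (fun haa => hjj (by rw [haa]))
      | right b => exact congrFun h1 b
  simp only [hcond]
  by_cases h2 : (fun b => f (Fin.natAdd n' b)) = (fun b => g (Fin.natAdd n' b)) <;>
    by_cases h1 : ∀ a, a ≠ k → f (Fin.castAdd nN a) = g (Fin.castAdd nN a) <;>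
      simp [h1, h2]

/-- Peeling the tail sites off the big monodromy matrix. -/
lemma Tmon_append (N n' nN : ℕ) (h u : ℂ) (ξ : Fin n' → ℂ) (yN : Fin nN → ℂ)
    (i : Fin N) (f : Fin n' → Fin N) (j : Fin N) (g : Fin (n' + nN) → Fin N) :
    Tmon N (n' + nN) (Rrat N h) u (Fin.append ξ yN)
        (i, Fin.append f (fun _ => i)) (j, g) =
      (∏ b : Fin nN, (u - yN b + h)) *
        (if (fun b => i) = (fun b => g (Fin.natAdd n' b)) then
            Tmon N n' (Rrat N h) u ξ (i, f) (j, fun a => g (Fin.castAdd nN a))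
          else 0) := by
  unfold Tmon
  rw [finRange_add, List.reverse_append, List.map_append, List.prod_append]
  have hhead : ((((List.finRange n').map (Fin.castAdd nN)).reverse).map
        (fun k => Raux N (n' + nN) (Rrat N h u (Fin.append ξ yN k)) k)).prod =
      liftM N n' nN
        (((List.finRange n').reverse.map
          (fun k => Raux N n' (Rrat N h u (ξ k)) k)).prod) := by
    rw [← liftM_list_prod, ← List.map_reverse, List.map_map, List.map_map]
    congr 1
    refine List.map_congr_left fun k _ => ?_
    simp only [Function.comp_apply, Fin.append_left, Raux_castAdd]
  rw [hhead]
  have htail := tail_prod_mul N (n' + nN) h u ((List.finRange nN).map (Fin.natAdd n')).reverse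
    id (fun k => Fin.append ξ yN k) i (Fin.append f (fun _ => i))
    (by
      intro k hk
      simp only [List.mem_reverse, List.mem_map] at hk
      obtain ⟨b, _, rfl⟩ := hk
      simp [Fin.append_right])
    (liftM N n' nN
      (((List.finRange n').reverse.map (fun k => Raux N n' (Rrat N h u (ξ k)) k)).prod))
    (j, g)
  simp only [List.map_map, Function.comp_def, id] at htail ⊢
  rw [htail]
  have hscal : (((List.finRange nN).map (Fin.natAdd n')).reverse.map
        (fun k => u - Fin.append ξ yN k + h)).prod = ∏ b : Fin nN, (u - yN b + h) := by
    rw [← List.map_reverse, List.map_map, Fin.prod_univ_def]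
    rw [← List.prod_reverse ((List.finRange nN).map fun b => u - yN b + h), ← List.map_reverse]
    congr 1
    refine List.map_congr_left fun b _ => ?_
    simp [Fin.append_right]
  rw [hscal]
  congr 1
  simp only [liftM, Matrix.of_apply, Fin.append_right, Fin.append_left]

/-- Main induction: the big product of `T`-entries factorises. -/
lemma prodB (N n' nN : ℕ) (h : ℂ) (ξ : Fin n' → ℂ) (yN : Fin nN → ℂ) (i : Fin N)
    (L : List (ℂ × Fin N)) (f g : Fin n' → Fin N) :
    ((L.map (fun z => Tent N (n' + nN) (Rrat N h) i z.2 z.1 (Fin.append ξ yN))).prod)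
        (Fin.append f (fun _ => i)) (Fin.append g (fun _ => i)) =
      (L.map (fun z => ∏ b : Fin nN, (z.1 - yN b + h))).prod *
        ((L.map (fun z => Tent N n' (Rrat N h) i z.2 z.1 ξ)).prod) f g := by
  induction L generalizing f with
  | nil =>
    simp only [List.map_nil, List.prod_nil, one_mul, Matrix.one_apply]
    by_cases hfg : f = g
    · subst hfg; simp
    · rw [if_neg, if_neg hfg]
      intro hap
      exact hfg (funext fun a => by
        simpa [Fin.append_left] using congrFun hap (Fin.castAdd nN a))
  | cons z L ih =>
    simp only [List.map_cons, List.prod_cons, Matrix.mul_apply]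
    rw [sum_append n' nN]
    have step : ∀ (u : Fin n' → Fin N) (v : Fin nN → Fin N),
        Tent N (n' + nN) (Rrat N h) i z.2 z.1 (Fin.append ξ yN)
            (Fin.append f (fun _ => i)) (Fin.append u v) *
          ((L.map (fun z => Tent N (n' + nN) (Rrat N h) i z.2 z.1 (Fin.append ξ yN))).prod)
            (Fin.append u v) (Fin.append g (fun _ => i)) =
        if (fun _ : Fin nN => i) = v then
          ((∏ b : Fin nN, (z.1 - yN b + h)) * Tmon N n' (Rrat N h) z.1 ξ (i, f) (z.2, u)) *
            (((L.map (fun z => ∏ b : Fin nN, (z.1 - yN b + h))).prod) *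
              ((L.map (fun z => Tent N n' (Rrat N h) i z.2 z.1 ξ)).prod) u g)
        else 0 := by
      intro u v
      have h1 : Tent N (n' + nN) (Rrat N h) i z.2 z.1 (Fin.append ξ yN)
            (Fin.append f (fun _ => i)) (Fin.append u v) =
          (∏ b : Fin nN, (z.1 - yN b + h)) *
            (if (fun _ : Fin nN => i) = v then
              Tmon N n' (Rrat N h) z.1 ξ (i, f) (z.2, u) else 0) := by
        have h2 := Tmon_append N n' nN h z.1 ξ yN i f z.2 (Fin.append u v)
        simp only [Fin.append_right, Fin.append_left] at h2
        exact h2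
      rw [h1]
      by_cases hv : (fun _ : Fin nN => i) = v
      · rw [if_pos hv, if_pos hv, ← hv, ih u]
      · rw [if_neg hv, if_neg hv, mul_zero, zero_mul]
    refine (Finset.sum_congr rfl fun u _ => Finset.sum_congr rfl fun v _ => step u v).trans ?_
    simp only [Finset.sum_ite_eq, Finset.mem_univ, if_true]
    rw [Finset.mul_sum]
    refine Finset.sum_congr rfl fun u _ => ?_
    simp only [Tent, Matrix.of_apply]
    ring

end KAux

end KAux

open MultComm in
/-- The rational enlarged rectangular partition function `K` factorises
as an explicit product times the rational rectangular partition function `H`. -/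
theorem K_eq_factor_mul_H_rational
    (N : ℕ) (hN : 2 ≤ N) (h : ℂ) (hh : h ≠ 0)
    (n' nN : ℕ)
    (xval : Fin n' → ℂ) (col : Fin n' → Fin (N - 1)) (hcol : Monotone col)
    (ξ : Fin n' → ℂ) (yN : Fin nN → ℂ) :
    (((List.finRange n').map (fun i =>
        Tent N (n' + nN) (Rrat N h)
          ⟨N - 1, by omega⟩ (Fin.castLE (by omega) (col i))
          (xval i) (Fin.append ξ yN))).prod)
      (Fin.append (fun i => Fin.castLE (by omega) (col i)) (fun _ => ⟨N - 1, by omega⟩))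
      (fun _ => ⟨N - 1, by omega⟩)
      =
    (∏ i : Fin n', ∏ b : Fin nN, (xval i - yN b + h))
      * (((List.finRange n').map (fun i =>
            Tent N n' (Rrat N h)
              ⟨N - 1, by omega⟩ (Fin.castLE (by omega) (col i))
              (xval i) ξ)).prod)
          (fun i => Fin.castLE (by omega) (col i)) (fun _ => ⟨N - 1, by omega⟩) := by
  have key := KAux.prodB N n' nN h ξ yN ⟨N - 1, by omega⟩
    ((List.finRange n').map (fun i => (xval i, (Fin.castLE (by omega) (col i) : Fin N))))
    (fun i => Fin.castLE (by omega) (col i)) (fun _ => ⟨N - 1, by omega⟩)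
  simp only [List.map_map] at key
  have hcol' : (fun _ : Fin (n' + nN) => (⟨N - 1, by omega⟩ : Fin N)) =
      Fin.append (fun _ : Fin n' => (⟨N - 1, by omega⟩ : Fin N))
        (fun _ : Fin nN => (⟨N - 1, by omega⟩ : Fin N)) := by
    funext j
    cases j using Fin.addCases with
    | left a => simp [Fin.append_left]
    | right b => simp [Fin.append_right]
  rw [hcol']
  rw [show (∏ i : Fin n', ∏ b : Fin nN, (xval i - yN b + h)) =
      ((List.finRange n').map (fun i => ∏ b : Fin nN, (xval i - yN b + h))).prod from
    Fin.prod_univ_def _]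
  exact key
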